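/- Let G be a triangulation of an orientable surface and φ a proper 4-coloring of G. For i ∈ {1,2,3,4}, let nᵢ be the number of vertices of odd degree colored i. Then n₁ ≡ n₂ ≡ n₃ ≡ n₄ (mod 2). -/

import Mathlib

/-- A (combinatorial) triangulation of an orientable surface: a set of
oriented triangular faces, closed under rotation, whose sides are edges of
`G`, such that every directed edge of `G` lies in exactly one oriented face.
(Consistency of the orientations of the faces encodes orientability.) -/
structure OrientedTriangulation {V : Type*} (G : SimpleGraph V) where
  faces : Set (V × V × V)
  rot : ∀ a b c, (a, b, c) ∈ faces → (b, c, a) ∈ faces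
  adj_of_mem : ∀ a b c, (a, b, c) ∈ faces → G.Adj a b
  unique_face : ∀ a b, G.Adj a b → ∃! c, (a, b, c) ∈ faces

open Finset

namespace FiskAux

lemma fin4_key : ∀ i j a b c : Fin 4, i ≠ j → a ≠ b → b ≠ c → c ≠ a →
    ((if ¬((a = i ∨ a = j) ↔ (b = i ∨ b = j)) then (1:ℕ) else 0) +
     (if ¬((b = i ∨ b = j) ↔ (c = i ∨ c = j)) then (1:ℕ) else 0) +
     (if ¬((c = i ∨ c = j) ↔ (a = i ∨ a = j)) then (1:ℕ) else 0)) = 2 := by decide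

lemma card_filter_congr {α : Type*} (s : Finset α) (p q : α → Prop)
    [DecidablePred p] [DecidablePred q] (h : ∀ a ∈ s, p a ↔ q a) :
    #(s.filter p) = #(s.filter q) := by rw [filter_congr h]

lemma card_split {α : Type*} (s : Finset α) (A B : α → Prop)
    [DecidablePred A] [DecidablePred B] :
    #(s.filter fun a => A a ∧ B a) + #(s.filter fun a => A a ∧ ¬ B a) = #(s.filter A) := by
  classical
  rw [← filter_filter, ← filter_filter]
  exact card_filter_add_card_filter_not _

variable {V : Type*} [Fintype V] [DecidableEq V] (G : SimpleGraph V) [DecidableRel G.Adj]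

lemma deg_sum_eq (p : V → Prop) [DecidablePred p] :
    ∑ v ∈ univ.filter p, G.degree v
      = #(univ.filter fun d : V × V => G.Adj d.1 d.2 ∧ p d.1) := by
  rw [card_eq_sum_card_fiberwise (f := fun d : V × V => d.1) (t := univ.filter p)
      (by intro x hx; simp only [mem_coe, mem_filter, mem_univ, true_and] at hx ⊢; exact hx.2)]
  refine sum_congr rfl fun v hv => ?_
  simp only [mem_filter, mem_univ, true_and] at hv
  rw [← SimpleGraph.card_neighborFinset_eq_degree]
  refine card_nbij' (fun w => (v, w)) (fun d => d.2) ?_ ?_ ?_ ?_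
  · intro w hw
    rw [mem_coe, SimpleGraph.mem_neighborFinset] at hw
    simp only [mem_coe, mem_filter, mem_univ, true_and]
    exact ⟨⟨hw, hv⟩, by trivial⟩
  · intro d hd
    simp only [mem_coe, mem_filter, mem_univ, true_and] at hd
    rw [mem_coe, SimpleGraph.mem_neighborFinset]
    rcases hd with ⟨⟨ha, _⟩, h1⟩
    rwa [← h1]
  · intro w _; rfl
  · intro d hd
    simp only [mem_coe, mem_filter, mem_univ, true_and] at hd
    exact Prod.ext hd.2.symm rfl

lemma odd_filter (p : V → Prop) [DecidablePred p] :
    #(univ.filter fun v => Odd (G.degree v) ∧ p v) % 2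
      = (∑ v ∈ univ.filter p, G.degree v) % 2 := by
  have hfilt : (univ.filter fun v => Odd (G.degree v) ∧ p v)
      = (univ.filter p).filter (fun v => Odd (G.degree v)) := by
    rw [filter_filter]
    exact filter_congr (by intro v _; tauto)
  rw [hfilt, Finset.sum_nat_mod]
  have h : ∀ v ∈ univ.filter p, G.degree v % 2 = if Odd (G.degree v) then 1 else 0 := by
    intro v _
    by_cases h : Odd (G.degree v)
    · simp [h, Nat.odd_iff.mp h]
    · simp [h, Nat.even_iff.mp (Nat.not_odd_iff_even.mp h)]
  rw [sum_congr rfl h, Finset.sum_boole, Nat.cast_id]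

lemma swap_card (q : V → V → Prop) [∀ a b, Decidable (q a b)] :
    #(univ.filter fun d : V × V => G.Adj d.1 d.2 ∧ q d.1 d.2)
      = #(univ.filter fun d : V × V => G.Adj d.1 d.2 ∧ q d.2 d.1) := by
  refine card_nbij' (fun d => (d.2, d.1)) (fun d => (d.2, d.1)) ?_ ?_ ?_ ?_
  · intro d hd; simp only [mem_coe, mem_filter, mem_univ, true_and] at hd ⊢
    exact ⟨hd.1.symm, hd.2⟩
  · intro d hd; simp only [mem_coe, mem_filter, mem_univ, true_and] at hd ⊢
    exact ⟨hd.1.symm, hd.2⟩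
  · intro d _; rfl
  · intro d _; rfl

variable (T : OrientedTriangulation G)

noncomputable def Fc : Finset (V × V × V) := (Set.toFinite T.faces).toFinset

lemma mem_Fc {t : V × V × V} : t ∈ Fc G T ↔ t ∈ T.faces := Set.Finite.mem_toFinset _

lemma adj12 {t : V × V × V} (h : t ∈ T.faces) : G.Adj t.1 t.2.1 :=
  T.adj_of_mem _ _ _ h

lemma adj23 {t : V × V × V} (h : t ∈ T.faces) : G.Adj t.2.1 t.2.2 :=
  T.adj_of_mem _ _ _ (T.rot _ _ _ h)

lemma adj31 {t : V × V × V} (h : t ∈ T.faces) : G.Adj t.2.2 t.1 :=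
  T.adj_of_mem _ _ _ (T.rot _ _ _ (T.rot _ _ _ h))

lemma proj_card (p : V × V → Prop) [DecidablePred p] :
    #((Fc G T).filter fun t => p (t.1, t.2.1))
      = #(univ.filter fun d : V × V => G.Adj d.1 d.2 ∧ p d) := by
  refine card_nbij (fun t : V × V × V => (t.1, t.2.1)) ?_ ?_ ?_
  · intro t ht
    simp only [mem_coe, mem_filter, mem_Fc, mem_univ, true_and] at ht ⊢
    exact ⟨adj12 G T ht.1, ht.2⟩
  · intro t ht t' ht' he
    simp only [coe_filter, Set.mem_setOf_eq, mem_Fc] at ht ht'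
    have h1 : t.1 = t'.1 := congrArg (fun d : V × V => d.1) he
    have h2 : t.2.1 = t'.2.1 := congrArg (fun d : V × V => d.2) he
    have h3 : t.2.2 = t'.2.2 := by
      have hu := T.unique_face t.1 t.2.1 (adj12 G T ht.1)
      refine hu.unique ht.1 ?_
      rw [h1, h2]
      exact ht'.1
    exact Prod.ext h1 (Prod.ext h2 h3)
  · intro d hd
    simp only [coe_filter, Set.mem_setOf_eq, mem_univ, true_and] at hd
    obtain ⟨c, hc, _⟩ := T.unique_face d.1 d.2 hd.1
    refine ⟨(d.1, d.2, c), ?_, rfl⟩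
    simp only [coe_filter, Set.mem_setOf_eq, mem_Fc]
    exact ⟨hc, hd.2⟩

lemma rot_sum (f : V × V × V → ℕ) :
    ∑ t ∈ Fc G T, f (t.2.1, t.2.2, t.1) = ∑ t ∈ Fc G T, f t := by
  refine sum_nbij' (fun t : V × V × V => (t.2.1, t.2.2, t.1))
    (fun t : V × V × V => (t.2.2, t.1, t.2.1)) ?_ ?_ ?_ ?_ ?_
  · intro t ht
    rw [mem_Fc] at ht ⊢
    exact T.rot _ _ _ ht
  · intro t ht
    rw [mem_Fc] at ht ⊢
    exact T.rot _ _ _ (T.rot _ _ _ ht)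
  · intro t _; rfl
  · intro t _; rfl
  · intro t _; rfl

include T in
lemma key (φ : G.Coloring (Fin 4)) (i j : Fin 4) (hij : i ≠ j) :
    (#(univ.filter fun v => Odd (G.degree v) ∧ φ v = i)
      + #(univ.filter fun v => Odd (G.degree v) ∧ φ v = j)) % 2 = 0 := by
  set P : V → Prop := fun v => φ v = i ∨ φ v = j with hP
  -- the per-face count
  have hface : ∀ t ∈ Fc G T,
      ((if ¬(P t.1 ↔ P t.2.1) then (1:ℕ) else 0) +
       (if ¬(P t.2.1 ↔ P t.2.2) then (1:ℕ) else 0) +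
       (if ¬(P t.2.2 ↔ P t.1) then (1:ℕ) else 0)) = 2 := by
    intro t ht
    rw [mem_Fc] at ht
    exact fin4_key i j (φ t.1) (φ t.2.1) (φ t.2.2) hij
      (φ.valid (adj12 G T ht)) (φ.valid (adj23 G T ht)) (φ.valid (adj31 G T ht))
  have hsum : ∑ t ∈ Fc G T,
      ((if ¬(P t.1 ↔ P t.2.1) then (1:ℕ) else 0) +
       (if ¬(P t.2.1 ↔ P t.2.2) then (1:ℕ) else 0) +
       (if ¬(P t.2.2 ↔ P t.1) then (1:ℕ) else 0)) = 2 * #(Fc G T) := by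
    rw [sum_congr rfl hface, sum_const, smul_eq_mul, mul_comm]
  rw [sum_add_distrib, sum_add_distrib] at hsum
  -- the three sums are all equal to S
  set S : ℕ := #(univ.filter fun d : V × V => G.Adj d.1 d.2 ∧ ¬(P d.1 ↔ P d.2)) with hSdef
  have e1 : ∑ t ∈ Fc G T, (if ¬(P t.1 ↔ P t.2.1) then (1:ℕ) else 0) = S := by
    rw [sum_boole]
    rw [show ((Fc G T).filter fun t => ¬(P t.1 ↔ P t.2.1))
        = ((Fc G T).filter fun t => (fun d : V × V => ¬(P d.1 ↔ P d.2)) (t.1, t.2.1)) from rfl]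
    rw [proj_card G T (fun d : V × V => ¬(P d.1 ↔ P d.2))]
    simp [hSdef]
  have e2 : ∑ t ∈ Fc G T, (if ¬(P t.2.1 ↔ P t.2.2) then (1:ℕ) else 0) = S := by
    have h1 := rot_sum G T (fun t => if ¬(P t.1 ↔ P t.2.1) then (1:ℕ) else 0)
    rw [← e1, ← h1]
  have e3 : ∑ t ∈ Fc G T, (if ¬(P t.2.2 ↔ P t.1) then (1:ℕ) else 0) = S := by
    have h1 := rot_sum G T (fun t => if ¬(P t.2.1 ↔ P t.2.2) then (1:ℕ) else 0)
    rw [← e2, ← h1]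
  rw [e1, e2, e3] at hsum
  -- faces are in bijection with directed edges
  have hFcD : #(Fc G T) = #(univ.filter fun d : V × V => G.Adj d.1 d.2) := by
    have h1 := proj_card G T (fun _ : V × V => True)
    simpa using h1
  -- directed edges count
  have hDdeg : #(univ.filter fun d : V × V => G.Adj d.1 d.2) = ∑ v, G.degree v := by
    have h1 := deg_sum_eq G (fun _ : V => True)
    simp only [filter_true, and_true] at h1
    rw [h1]
  have hD2E : #(univ.filter fun d : V × V => G.Adj d.1 d.2) = 2 * #G.edgeFinset := by
    rw [hDdeg, G.sum_degrees_eq_twice_card_edges]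
  -- split S into the two directions
  set C : ℕ := #(univ.filter fun d : V × V => G.Adj d.1 d.2 ∧ (P d.1 ∧ ¬ P d.2)) with hCdef
  set C' : ℕ := #(univ.filter fun d : V × V => G.Adj d.1 d.2 ∧ (¬ P d.1 ∧ P d.2)) with hC'def
  have hSCC' : C + C' = S := by
    have hs := card_split (univ : Finset (V × V))
      (fun d => G.Adj d.1 d.2 ∧ ¬(P d.1 ↔ P d.2)) (fun d => P d.1)
    rw [hSdef, ← hs]
    congr 1
    · exact card_filter_congr _ _ _ (by intro d _; tauto)
    · exact card_filter_congr _ _ _ (by intro d _; tauto)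
  have hCC' : C = C' := by
    rw [hCdef, swap_card G (fun a b => P a ∧ ¬ P b)]
    exact card_filter_congr _ _ _ (by intro d _; tauto)
  -- now the edge-count side for the degree sum over the two classes
  have hvalid : ∀ d : V × V, G.Adj d.1 d.2 → φ d.1 ≠ φ d.2 := fun d h => φ.valid h
  set B1 : ℕ := #(univ.filter fun d : V × V => G.Adj d.1 d.2 ∧ (φ d.1 = i ∧ φ d.2 = j)) with hB1
  set B2 : ℕ := #(univ.filter fun d : V × V => G.Adj d.1 d.2 ∧ (φ d.1 = j ∧ φ d.2 = i)) with hB2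
  have hA1 : B1 + B2 = #(univ.filter fun d : V × V => G.Adj d.1 d.2 ∧ (P d.1 ∧ P d.2)) := by
    have hs := card_split (univ : Finset (V × V))
      (fun d => G.Adj d.1 d.2 ∧ (P d.1 ∧ P d.2)) (fun d => φ d.1 = i)
    rw [← hs]
    congr 1
    · refine card_filter_congr _ _ _ ?_
      intro d _
      have hv := hvalid d
      constructor
      · rintro ⟨ha, h1, h2⟩
        exact ⟨⟨ha, Or.inl h1, Or.inr h2⟩, h1⟩
      · rintro ⟨⟨ha, _, hp2⟩, h1⟩
        refine ⟨ha, h1, ?_⟩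
        rcases hp2 with h | h
        · exact absurd (h1.trans h.symm) (hv ha)
        · exact h
    · refine card_filter_congr _ _ _ ?_
      intro d _
      have hv := hvalid d
      constructor
      · rintro ⟨ha, h1, h2⟩
        refine ⟨⟨ha, Or.inr h1, Or.inl h2⟩, ?_⟩
        intro hc
        exact hij (hc.symm.trans h1)
      · rintro ⟨⟨ha, hp1, hp2⟩, h1⟩
        have hj1 : φ d.1 = j := by tauto
        refine ⟨ha, hj1, ?_⟩
        rcases hp2 with h | h
        · exact h
        · exact absurd (hj1.trans h.symm) (hv ha)
  have hB12 : B1 = B2 := by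
    rw [hB1, swap_card G (fun a b => φ a = i ∧ φ b = j)]
    exact card_filter_congr _ _ _ (by intro d _; tauto)
  -- degree sum over the union class
  have hAcard : ∑ v ∈ univ.filter P, G.degree v
      = #(univ.filter fun d : V × V => G.Adj d.1 d.2 ∧ (P d.1 ∧ P d.2)) + C := by
    rw [deg_sum_eq G P]
    have hs := card_split (univ : Finset (V × V))
      (fun d => G.Adj d.1 d.2 ∧ P d.1) (fun d => P d.2)
    rw [← hs]
    congr 1
    · exact card_filter_congr _ _ _ (by intro d _; tauto)
    · rw [hCdef]
      exact card_filter_congr _ _ _ (by intro d _; tauto)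
  -- combine the two odd-vertex counts
  have hunion : #(univ.filter fun v => Odd (G.degree v) ∧ φ v = i)
      + #(univ.filter fun v => Odd (G.degree v) ∧ φ v = j)
      = #(univ.filter fun v => Odd (G.degree v) ∧ P v) := by
    have hs := card_split (univ : Finset V)
      (fun v => Odd (G.degree v) ∧ P v) (fun v => φ v = i)
    rw [← hs]
    congr 1
    · exact card_filter_congr _ _ _ (by intro v _; tauto)
    · refine card_filter_congr _ _ _ ?_
      intro v _
      constructor
      · rintro ⟨ho, h1⟩
        exact ⟨⟨ho, Or.inr h1⟩, fun hc => hij (hc.symm.trans h1)⟩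
      · rintro ⟨⟨ho, hp⟩, h1⟩
        refine ⟨ho, ?_⟩
        rcases hp with h | h
        · exact absurd h h1
        · exact h
  rw [hunion, odd_filter G P, hAcard, ← hA1]
  -- final arithmetic
  omega

end FiskAux

/-- Fisk: For a proper 4-coloring of a triangulation of an
orientable surface, the numbers of odd-degree vertices in the four color
classes all have the same parity. -/
theorem stmt_10 {V : Type*} [Fintype V] (G : SimpleGraph V) [DecidableRel G.Adj]
    (T : OrientedTriangulation G) (φ : G.Coloring (Fin 4)) :
    ∀ i j : Fin 4,
      {v : V | Odd (G.degree v) ∧ φ v = i}.ncard % 2 =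
      {v : V | Odd (G.degree v) ∧ φ v = j}.ncard % 2 := by
  classical
  intro i j
  have hconv : ∀ k : Fin 4, {v : V | Odd (G.degree v) ∧ φ v = k}.ncard
      = #(Finset.univ.filter fun v => Odd (G.degree v) ∧ φ v = k) := by
    intro k
    rw [Set.ncard_eq_toFinset_card', Set.toFinset_setOf]
  rw [hconv i, hconv j]
  by_cases hij : i = j
  · rw [hij]
  · have h := FiskAux.key G T φ i j hij
    omega
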